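/- Let μ < 1 and T > 0. Then there exists no twice continuously differentiable function h : [T,∞) → ℝ with h′(t) > 0 for all t ≥ T satisfying the differential inequality 4t·h″(t) / (1 + 4t·h′(t)²) ≥ (1+t)^{(1−μ)/2} · h′(t) for all t ≥ T. -/

import Mathlib

open Set Filter

/-- The ordinary differential inequality `4t·h″/(1+4t·(h′)²) ≥ (1+t)^{(1−μ)/2} h′`,
arising from the radialization of the mean curvature operator, has no increasing
`C²` solutions on a half-line `[T,∞)` when `μ < 1`. -/
theorem statement18 (μ T : ℝ) (hμ : μ < 1) (hT : 0 < T) :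
    ¬ ∃ h h' h'' : ℝ → ℝ,
      (∀ t ∈ Ici T, HasDerivWithinAt h (h' t) (Ici T) t) ∧
      (∀ t ∈ Ici T, HasDerivWithinAt h' (h'' t) (Ici T) t) ∧
      ContinuousOn h'' (Ici T) ∧
      (∀ t ∈ Ici T, 0 < h' t) ∧
      (∀ t ∈ Ici T, (1 + t) ^ ((1 - μ) / 2) * h' t ≤
        4 * t * h'' t / (1 + 4 * t * (h' t) ^ 2)) := by
  rintro ⟨h, g, G, _hd1, hd2, _hc, hpos, hineq⟩
  -- Step 1: for every t ≥ T, (g t)^3 ≤ G t.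
  have key : ∀ t ∈ Ici T, (g t) ^ 3 ≤ G t := by
    intro t ht
    have htpos : 0 < t := lt_of_lt_of_le hT ht
    have hg : 0 < g t := hpos t ht
    have hDpos : (0:ℝ) < 1 + 4 * t * (g t) ^ 2 := by positivity
    have hrpow : (1:ℝ) ≤ (1 + t) ^ ((1 - μ) / 2) :=
      Real.one_le_rpow (by linarith) (by linarith)
    have h1 := hineq t ht
    rw [le_div_iff₀ hDpos] at h1
    nlinarith [mul_pos hg hDpos, mul_le_mul_of_nonneg_right hrpow
      (le_of_lt (mul_pos hg hDpos))]
  -- Step 2: ψ t = -(1/2) * ((g t)^2)⁻¹ - t is monotone on Ici T.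
  set ψ : ℝ → ℝ := fun t => -(1/2) * ((g t) ^ 2)⁻¹ - t with hψdef
  have hψd : ∀ t ∈ Ici T, HasDerivWithinAt ψ (G t / (g t) ^ 3 - 1) (Ici T) t := by
    intro t ht
    have hg : 0 < g t := hpos t ht
    have h2 : HasDerivWithinAt (fun s => ((g s) ^ 2)⁻¹)
        (-(((2:ℕ) * g t ^ (2-1) * G t)) / ((g t ^ 2) ^ 2)) (Ici T) t :=
      ((hd2 t ht).pow 2).inv (pow_pos hg 2).ne'
    have h3 := ((h2.const_mul (-(1/2:ℝ)))).sub (hasDerivWithinAt_id t (Ici T))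
    convert h3 using 1
    · rfl
    · rfl
    · rfl
    field_simp [hg.ne']
    ring
  have hψmono : MonotoneOn ψ (Ici T) := by
    apply monotoneOn_of_hasDerivWithinAt_nonneg (convex_Ici T)
      (fun t ht => (hψd t ht).continuousWithinAt)
      (f' := fun t => G t / (g t) ^ 3 - 1)
    · intro t ht
      rw [interior_Ici] at ht ⊢
      exact (hψd t (le_of_lt (mem_Ioi.mp ht))).mono (Ioi_subset_Ici le_rfl)
    · intro t ht
      rw [interior_Ici] at ht
      have ht' : t ∈ Ici T := le_of_lt (mem_Ioi.mp ht)
      have hg : 0 < g t := hpos t ht'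
      have hk := key t ht'
      have : (1:ℝ) ≤ G t / (g t) ^ 3 := by
        rw [le_div_iff₀ (by positivity)]
        linarith
      linarith
  -- Step 3: contradiction by taking t large.
  set t₀ : ℝ := T + ((g T) ^ 2)⁻¹ / 2 + 1 with ht₀def
  have hgT : 0 < g T := hpos T (mem_Ici.mpr le_rfl)
  have ht₀ : T ≤ t₀ := by
    have h0 : 0 ≤ ((g T) ^ 2)⁻¹ / 2 := by positivity
    rw [ht₀def]; linarith
  have hmono := hψmono (le_refl T : T ∈ Ici T) (ht₀ : t₀ ∈ Ici T) ht₀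
  have hgt₀ : 0 < g t₀ := hpos t₀ ht₀
  have hinvpos : 0 < ((g t₀) ^ 2)⁻¹ := by positivity
  simp only [hψdef] at hmono
  nlinarith
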